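/- Let P be a b₀×b₁ probability matrix with positive entries and let λ₀, λ₁ satisfy λ₀, λ₁ ≤ 1 ≤ λ₀+λ₁. Say λ₀, λ₁ are P-sub-conjugate if for every b₀×b₁ probability matrix Q: K(Q‖P) ≥ λ₀·K(Q_{·*}‖P_{·*}) + λ₁·K(Q_{*·}‖P_{*·}). Then: if λ₀, λ₁ are P₁-sub-conjugate and P₂-sub-conjugate, they are (P₁⊗P₂)-sub-conjugate, where ⊗ is the tensor (Kronecker) product of probability matrices. -/

import Mathlib

open Finset

/-- `λ₀, λ₁` are `P`-sub-conjugate: for every probability matrix `Q` (same shape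
as `P`), `K(Q‖P) ≥ λ₀ K(Q_{·*}‖P_{·*}) + λ₁ K(Q_{*·}‖P_{*·})`. -/
def SubConjugate {α β : Type*} [Fintype α] [Fintype β]
    (P : α → β → ℝ) (lam0 lam1 : ℝ) : Prop :=
  ∀ Q : α → β → ℝ, (∀ j k, 0 ≤ Q j k) → (∑ j, ∑ k, Q j k = 1) →
    lam0 * (∑ j, (∑ k, Q j k) * Real.log ((∑ k, Q j k) / (∑ k, P j k))) +
      lam1 * (∑ k, (∑ j, Q j k) * Real.log ((∑ j, Q j k) / (∑ j, P j k))) ≤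
    ∑ j, ∑ k, Q j k * Real.log (Q j k / P j k)

private lemma logSum {ι : Type*} [Fintype ι] (a b : ι → ℝ) (ha : ∀ i, 0 ≤ a i)
    (hb : ∀ i, 0 ≤ b i) (hab : ∀ i, b i = 0 → a i = 0) :
    (∑ i, a i) * Real.log ((∑ i, a i) / (∑ i, b i)) ≤ ∑ i, a i * Real.log (a i / b i) := by
  by_cases hS : (∑ i, b i) = 0
  · have hb0 : ∀ i, b i = 0 := fun i =>
      (Finset.sum_eq_zero_iff_of_nonneg (fun i _ => hb i)).1 hS i (Finset.mem_univ i)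
    have ha0 : ∀ i, a i = 0 := fun i => hab i (hb0 i)
    simp [ha0]
  · have hS' : 0 < ∑ i, b i :=
      lt_of_le_of_ne (Finset.sum_nonneg fun i _ => hb i) (Ne.symm hS)
    have jensen := Real.convexOn_mul_log.map_sum_le (t := Finset.univ)
      (w := fun i => b i / ∑ j, b j) (p := fun i => a i / b i)
      (fun i _ => div_nonneg (hb i) hS'.le)
      (by rw [← Finset.sum_div, div_self hS'.ne'])
      (fun i _ => Set.mem_Ici.2 (div_nonneg (ha i) (hb i)))
    have e1 : ∑ i, (b i / ∑ j, b j) • (a i / b i) = (∑ i, a i) / ∑ j, b j := by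
      have hterm : ∀ i, (b i / ∑ j, b j) • (a i / b i) = a i / ∑ j, b j := by
        intro i
        rcases eq_or_lt_of_le (hb i) with h | h
        · simp [← h, hab i h.symm]
        · rw [smul_eq_mul]
          have hbne : b i ≠ 0 := h.ne'
          have hSne : (∑ j, b j) ≠ 0 := hS'.ne'
          field_simp
      simp only [hterm]
      rw [← Finset.sum_div]
    have e2 : ∀ i, (b i / ∑ j, b j) • ((a i / b i) * Real.log (a i / b i)) =
        (a i * Real.log (a i / b i)) / ∑ j, b j := by
      intro i
      rcases eq_or_lt_of_le (hb i) with h | h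
      · simp [← h, hab i h.symm]
      · rw [smul_eq_mul]
        have hbne : b i ≠ 0 := h.ne'
        have hSne : (∑ j, b j) ≠ 0 := hS'.ne'
        field_simp
    rw [e1] at jensen
    simp only [e2] at jensen
    rw [← Finset.sum_div] at jensen
    have h1 : (∑ i, a i) * Real.log ((∑ i, a i) / ∑ i, b i) =
        (∑ j, b j) * (((∑ i, a i) / ∑ j, b j) * Real.log ((∑ i, a i) / ∑ j, b j)) := by
      field_simp
    have h2 : (∑ i, a i * Real.log (a i / b i)) =
        (∑ j, b j) * ((∑ i, a i * Real.log (a i / b i)) / ∑ j, b j) := by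
      field_simp
    rw [h1, h2]
    exact mul_le_mul_of_nonneg_left jensen hS'.le

private lemma chainRule {ι : Type*} [Fintype ι] (q : ι → ℝ) (hq : ∀ i, 0 ≤ q i)
    (A : ℝ) (hA : 0 < A) (B : ι → ℝ) (hB : ∀ i, 0 < B i) :
    ∑ i, q i * Real.log (q i / (A * B i)) =
      (∑ i, q i) * Real.log ((∑ i, q i) / A) +
        ∑ i, q i * Real.log ((q i / ∑ j, q j) / B i) := by
  by_cases hS : (∑ i, q i) = 0
  · have hq0 : ∀ i, q i = 0 := fun i =>
      (Finset.sum_eq_zero_iff_of_nonneg (fun i _ => hq i)).1 hS i (Finset.mem_univ i)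
    simp [hq0]
  · have hS' : 0 < ∑ i, q i :=
      lt_of_le_of_ne (Finset.sum_nonneg fun i _ => hq i) (Ne.symm hS)
    have key : ∀ i, q i * Real.log (q i / (A * B i)) =
        q i * Real.log ((q i / ∑ j, q j) / B i) + q i * Real.log ((∑ j, q j) / A) := by
      intro i
      rcases eq_or_lt_of_le (hq i) with h | h
      · simp [← h]
      · have hAne : A ≠ 0 := hA.ne'
        have hBne : B i ≠ 0 := (hB i).ne'
        have hSne : (∑ j, q j) ≠ 0 := hS'.ne'
        have h1 : q i / (A * B i) = ((q i / ∑ j, q j) / B i) * ((∑ j, q j) / A) := by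
          field_simp
        have hp1 : 0 < (q i / ∑ j, q j) / B i := div_pos (div_pos h hS') (hB i)
        have hp2 : 0 < (∑ j, q j) / A := div_pos hS' hA
        rw [h1, Real.log_mul hp1.ne' hp2.ne', mul_add]
    rw [Finset.sum_congr rfl fun i _ => key i, Finset.sum_add_distrib, ← Finset.sum_mul]
    ring

private lemma chainRule2 {ι κ : Type*} [Fintype ι] [Fintype κ] (q : ι → κ → ℝ)
    (hq : ∀ i k, 0 ≤ q i k) (A : ℝ) (hA : 0 < A) (B : ι → κ → ℝ) (hB : ∀ i k, 0 < B i k) :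
    ∑ i, ∑ k, q i k * Real.log (q i k / (A * B i k)) =
      (∑ i, ∑ k, q i k) * Real.log ((∑ i, ∑ k, q i k) / A) +
        ∑ i, ∑ k, q i k * Real.log ((q i k / ∑ i', ∑ k', q i' k') / B i k) := by
  have := chainRule (fun p : ι × κ => q p.1 p.2) (fun p => hq p.1 p.2) A hA
    (fun p : ι × κ => B p.1 p.2) (fun p => hB p.1 p.2)
  simpa only [Fintype.sum_prod_type] using this

/-- If `λ₀, λ₁ ≤ 1 ≤ λ₀+λ₁` are sub-conjugate for `P₁` and for `P₂`, then they
are sub-conjugate for the tensor product `P₁ ⊗ P₂`. -/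
theorem subConjugate_tensor (b₀ b₁ c₀ c₁ : ℕ)
    (P₁ : Fin b₀ → Fin b₁ → ℝ) (P₂ : Fin c₀ → Fin c₁ → ℝ)
    (hP₁pos : ∀ j k, 0 < P₁ j k) (hP₁sum : ∑ j, ∑ k, P₁ j k = 1)
    (hP₂pos : ∀ j k, 0 < P₂ j k) (hP₂sum : ∑ j, ∑ k, P₂ j k = 1)
    (lam0 lam1 : ℝ) (hl0 : lam0 ≤ 1) (hl1 : lam1 ≤ 1) (hls : 1 ≤ lam0 + lam1)
    (h₁ : SubConjugate P₁ lam0 lam1) (h₂ : SubConjugate P₂ lam0 lam1) :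
    SubConjugate (fun (j : Fin b₀ × Fin c₀) (k : Fin b₁ × Fin c₁) =>
      P₁ j.1 k.1 * P₂ j.2 k.2) lam0 lam1 := by
  have hb₀ : 0 < b₀ := by
    rcases Nat.eq_zero_or_pos b₀ with h | h
    · subst h; simp at hP₁sum
    · exact h
  have hb₁ : 0 < b₁ := by
    rcases Nat.eq_zero_or_pos b₁ with h | h
    · subst h; simp at hP₁sum
    · exact h
  have hc₀ : 0 < c₀ := by
    rcases Nat.eq_zero_or_pos c₀ with h | h
    · subst h; simp at hP₂sum
    · exact h
  have hc₁ : 0 < c₁ := by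
    rcases Nat.eq_zero_or_pos c₁ with h | h
    · subst h; simp at hP₂sum
    · exact h
  haveI : Nonempty (Fin b₀) := Fin.pos_iff_nonempty.mp hb₀
  haveI : Nonempty (Fin b₁) := Fin.pos_iff_nonempty.mp hb₁
  haveI : Nonempty (Fin c₀) := Fin.pos_iff_nonempty.mp hc₀
  haveI : Nonempty (Fin c₁) := Fin.pos_iff_nonempty.mp hc₁
  have hA₁ : ∀ j₁, 0 < ∑ k₁, P₁ j₁ k₁ := fun j₁ =>
    Finset.sum_pos (fun k _ => hP₁pos j₁ k) Finset.univ_nonempty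
  have hB₁ : ∀ k₁, 0 < ∑ j₁, P₁ j₁ k₁ := fun k₁ =>
    Finset.sum_pos (fun j _ => hP₁pos j k₁) Finset.univ_nonempty
  have hA₂ : ∀ j₂, 0 < ∑ k₂, P₂ j₂ k₂ := fun j₂ =>
    Finset.sum_pos (fun k _ => hP₂pos j₂ k) Finset.univ_nonempty
  have hB₂ : ∀ k₂, 0 < ∑ j₂, P₂ j₂ k₂ := fun k₂ =>
    Finset.sum_pos (fun j _ => hP₂pos j k₂) Finset.univ_nonempty
  have hlam0 : 0 ≤ lam0 := by linarith
  have hlam1 : 0 ≤ lam1 := by linarith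
  intro Q hQ hQsum
  -- nonnegativity of marginals
  have hu : ∀ j₁ k₁ j₂, 0 ≤ ∑ k₂, Q (j₁, j₂) (k₁, k₂) := fun _ _ _ =>
    Finset.sum_nonneg fun _ _ => hQ _ _
  have hv : ∀ j₁ k₁ k₂, 0 ≤ ∑ j₂, Q (j₁, j₂) (k₁, k₂) := fun _ _ _ =>
    Finset.sum_nonneg fun _ _ => hQ _ _
  have hs : ∀ j₁ k₁, 0 ≤ ∑ j₂, ∑ k₂, Q (j₁, j₂) (k₁, k₂) := fun j₁ k₁ =>
    Finset.sum_nonneg fun j₂ _ => hu j₁ k₁ j₂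
  have hM : ∀ j₁ j₂, 0 ≤ ∑ k₁, ∑ k₂, Q (j₁, j₂) (k₁, k₂) := fun j₁ j₂ =>
    Finset.sum_nonneg fun k₁ _ => hu j₁ k₁ j₂
  have hN : ∀ k₁ k₂, 0 ≤ ∑ j₁, ∑ j₂, Q (j₁, j₂) (k₁, k₂) := fun k₁ k₂ =>
    Finset.sum_nonneg fun j₁ _ => hv j₁ k₁ k₂
  -- zero propagation from s
  have hQz : ∀ j₁ k₁, (∑ j₂, ∑ k₂, Q (j₁, j₂) (k₁, k₂)) = 0 →
      ∀ j₂ k₂, Q (j₁, j₂) (k₁, k₂) = 0 := by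
    intro j₁ k₁ h j₂ k₂
    have h1 : (∑ k₂, Q (j₁, j₂) (k₁, k₂)) = 0 :=
      (Finset.sum_eq_zero_iff_of_nonneg (fun j₂ _ => hu j₁ k₁ j₂)).1 h j₂ (Finset.mem_univ _)
    exact (Finset.sum_eq_zero_iff_of_nonneg (fun k₂ _ => hQ _ _)).1 h1 k₂ (Finset.mem_univ _)
  -- rewrite the three big sums in the goal
  have E0 : (∑ j : Fin b₀ × Fin c₀, (∑ k : Fin b₁ × Fin c₁, Q j k) *
        Real.log ((∑ k : Fin b₁ × Fin c₁, Q j k) /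
          (∑ k : Fin b₁ × Fin c₁, P₁ j.1 k.1 * P₂ j.2 k.2))) =
      ∑ j₁, ∑ j₂, (∑ k₁, ∑ k₂, Q (j₁, j₂) (k₁, k₂)) *
        Real.log ((∑ k₁, ∑ k₂, Q (j₁, j₂) (k₁, k₂)) /
          ((∑ k₁, P₁ j₁ k₁) * (∑ k₂, P₂ j₂ k₂))) := by
    simp only [Fintype.sum_prod_type, Finset.sum_mul_sum]
  have E1 : (∑ k : Fin b₁ × Fin c₁, (∑ j : Fin b₀ × Fin c₀, Q j k) *
        Real.log ((∑ j : Fin b₀ × Fin c₀, Q j k) /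
          (∑ j : Fin b₀ × Fin c₀, P₁ j.1 k.1 * P₂ j.2 k.2))) =
      ∑ k₁, ∑ k₂, (∑ j₁, ∑ j₂, Q (j₁, j₂) (k₁, k₂)) *
        Real.log ((∑ j₁, ∑ j₂, Q (j₁, j₂) (k₁, k₂)) /
          ((∑ j₁, P₁ j₁ k₁) * (∑ j₂, P₂ j₂ k₂))) := by
    simp only [Fintype.sum_prod_type, Finset.sum_mul_sum]
  have E2 : (∑ j : Fin b₀ × Fin c₀, ∑ k : Fin b₁ × Fin c₁,
        Q j k * Real.log (Q j k / (P₁ j.1 k.1 * P₂ j.2 k.2))) =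
      ∑ j₁, ∑ k₁, ∑ j₂, ∑ k₂, Q (j₁, j₂) (k₁, k₂) *
        Real.log (Q (j₁, j₂) (k₁, k₂) / (P₁ j₁ k₁ * P₂ j₂ k₂)) := by
    simp only [Fintype.sum_prod_type]
    exact Finset.sum_congr rfl fun j₁ _ => Finset.sum_comm
  show lam0 * _ + lam1 * _ ≤ _
  rw [E0, E1, E2]
  -- chain rule decompositions
  have D0 : ∑ j₁, ∑ j₂, (∑ k₁, ∑ k₂, Q (j₁, j₂) (k₁, k₂)) *
        Real.log ((∑ k₁, ∑ k₂, Q (j₁, j₂) (k₁, k₂)) /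
          ((∑ k₁, P₁ j₁ k₁) * (∑ k₂, P₂ j₂ k₂))) =
      (∑ j₁, (∑ j₂, ∑ k₁, ∑ k₂, Q (j₁, j₂) (k₁, k₂)) *
          Real.log ((∑ j₂, ∑ k₁, ∑ k₂, Q (j₁, j₂) (k₁, k₂)) / (∑ k₁, P₁ j₁ k₁))) +
        ∑ j₁, ∑ j₂, (∑ k₁, ∑ k₂, Q (j₁, j₂) (k₁, k₂)) *
          Real.log (((∑ k₁, ∑ k₂, Q (j₁, j₂) (k₁, k₂)) /
            (∑ j₂, ∑ k₁, ∑ k₂, Q (j₁, j₂) (k₁, k₂))) / (∑ k₂, P₂ j₂ k₂)) := by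
    rw [← Finset.sum_add_distrib]
    exact Finset.sum_congr rfl fun j₁ _ =>
      chainRule (fun j₂ => ∑ k₁, ∑ k₂, Q (j₁, j₂) (k₁, k₂)) (hM j₁)
        (∑ k₁, P₁ j₁ k₁) (hA₁ j₁) (fun j₂ => ∑ k₂, P₂ j₂ k₂) hA₂
  have D1 : ∑ k₁, ∑ k₂, (∑ j₁, ∑ j₂, Q (j₁, j₂) (k₁, k₂)) *
        Real.log ((∑ j₁, ∑ j₂, Q (j₁, j₂) (k₁, k₂)) /
          ((∑ j₁, P₁ j₁ k₁) * (∑ j₂, P₂ j₂ k₂))) =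
      (∑ k₁, (∑ k₂, ∑ j₁, ∑ j₂, Q (j₁, j₂) (k₁, k₂)) *
          Real.log ((∑ k₂, ∑ j₁, ∑ j₂, Q (j₁, j₂) (k₁, k₂)) / (∑ j₁, P₁ j₁ k₁))) +
        ∑ k₁, ∑ k₂, (∑ j₁, ∑ j₂, Q (j₁, j₂) (k₁, k₂)) *
          Real.log (((∑ j₁, ∑ j₂, Q (j₁, j₂) (k₁, k₂)) /
            (∑ k₂, ∑ j₁, ∑ j₂, Q (j₁, j₂) (k₁, k₂))) / (∑ j₂, P₂ j₂ k₂)) := by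
    rw [← Finset.sum_add_distrib]
    exact Finset.sum_congr rfl fun k₁ _ =>
      chainRule (fun k₂ => ∑ j₁, ∑ j₂, Q (j₁, j₂) (k₁, k₂)) (hN k₁)
        (∑ j₁, P₁ j₁ k₁) (hB₁ k₁) (fun k₂ => ∑ j₂, P₂ j₂ k₂) hB₂
  have D2 : ∑ j₁, ∑ k₁, ∑ j₂, ∑ k₂, Q (j₁, j₂) (k₁, k₂) *
        Real.log (Q (j₁, j₂) (k₁, k₂) / (P₁ j₁ k₁ * P₂ j₂ k₂)) =
      (∑ j₁, ∑ k₁, (∑ j₂, ∑ k₂, Q (j₁, j₂) (k₁, k₂)) *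
          Real.log ((∑ j₂, ∑ k₂, Q (j₁, j₂) (k₁, k₂)) / P₁ j₁ k₁)) +
        ∑ j₁, ∑ k₁, ∑ j₂, ∑ k₂, Q (j₁, j₂) (k₁, k₂) *
          Real.log ((Q (j₁, j₂) (k₁, k₂) / (∑ j₂, ∑ k₂, Q (j₁, j₂) (k₁, k₂))) /
            P₂ j₂ k₂) := by
    rw [← Finset.sum_add_distrib]
    refine Finset.sum_congr rfl fun j₁ _ => ?_
    rw [← Finset.sum_add_distrib]
    exact Finset.sum_congr rfl fun k₁ _ =>
      chainRule2 (fun j₂ k₂ => Q (j₁, j₂) (k₁, k₂)) (fun j₂ k₂ => hQ _ _)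
        (P₁ j₁ k₁) (hP₁pos j₁ k₁) (fun j₂ k₂ => P₂ j₂ k₂) (fun j₂ k₂ => hP₂pos j₂ k₂)
  rw [D0, D1, D2]
  -- sum-of-s identities
  have hrow : ∀ j₁, (∑ k₁, ∑ j₂, ∑ k₂, Q (j₁, j₂) (k₁, k₂)) =
      ∑ j₂, ∑ k₁, ∑ k₂, Q (j₁, j₂) (k₁, k₂) := fun j₁ => Finset.sum_comm
  have hcol : ∀ k₁, (∑ j₁, ∑ j₂, ∑ k₂, Q (j₁, j₂) (k₁, k₂)) =
      ∑ k₂, ∑ j₁, ∑ j₂, Q (j₁, j₂) (k₁, k₂) := by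
    intro k₁
    calc (∑ j₁, ∑ j₂, ∑ k₂, Q (j₁, j₂) (k₁, k₂))
        = ∑ j₁, ∑ k₂, ∑ j₂, Q (j₁, j₂) (k₁, k₂) :=
          Finset.sum_congr rfl fun j₁ _ => Finset.sum_comm
      _ = ∑ k₂, ∑ j₁, ∑ j₂, Q (j₁, j₂) (k₁, k₂) := Finset.sum_comm
  -- I1 : apply h₁ to the (j₁,k₁)-marginal
  have hsum1 : (∑ j₁, ∑ k₁, ∑ j₂, ∑ k₂, Q (j₁, j₂) (k₁, k₂)) = 1 := by
    rw [← hQsum]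
    simp only [Fintype.sum_prod_type]
    exact Finset.sum_congr rfl fun j₁ _ => Finset.sum_comm
  have I1 : lam0 * (∑ j₁, (∑ j₂, ∑ k₁, ∑ k₂, Q (j₁, j₂) (k₁, k₂)) *
        Real.log ((∑ j₂, ∑ k₁, ∑ k₂, Q (j₁, j₂) (k₁, k₂)) / (∑ k₁, P₁ j₁ k₁))) +
      lam1 * (∑ k₁, (∑ k₂, ∑ j₁, ∑ j₂, Q (j₁, j₂) (k₁, k₂)) *
        Real.log ((∑ k₂, ∑ j₁, ∑ j₂, Q (j₁, j₂) (k₁, k₂)) / (∑ j₁, P₁ j₁ k₁))) ≤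
      ∑ j₁, ∑ k₁, (∑ j₂, ∑ k₂, Q (j₁, j₂) (k₁, k₂)) *
        Real.log ((∑ j₂, ∑ k₂, Q (j₁, j₂) (k₁, k₂)) / P₁ j₁ k₁) := by
    have happ := h₁ (fun j₁ k₁ => ∑ j₂, ∑ k₂, Q (j₁, j₂) (k₁, k₂))
      (fun j₁ k₁ => hs j₁ k₁) hsum1
    simpa only [hrow, hcol] using happ
  -- I2 : conditional application of h₂, scaled by s
  have I2 : ∀ j₁ k₁,
      lam0 * (∑ j₂, (∑ k₂, Q (j₁, j₂) (k₁, k₂)) *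
          Real.log (((∑ k₂, Q (j₁, j₂) (k₁, k₂)) /
            (∑ j₂, ∑ k₂, Q (j₁, j₂) (k₁, k₂))) / (∑ k₂, P₂ j₂ k₂))) +
        lam1 * (∑ k₂, (∑ j₂, Q (j₁, j₂) (k₁, k₂)) *
          Real.log (((∑ j₂, Q (j₁, j₂) (k₁, k₂)) /
            (∑ j₂, ∑ k₂, Q (j₁, j₂) (k₁, k₂))) / (∑ j₂, P₂ j₂ k₂))) ≤
      ∑ j₂, ∑ k₂, Q (j₁, j₂) (k₁, k₂) *
        Real.log ((Q (j₁, j₂) (k₁, k₂) / (∑ j₂, ∑ k₂, Q (j₁, j₂) (k₁, k₂))) /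
          P₂ j₂ k₂) := by
    intro j₁ k₁
    by_cases hs0 : (∑ j₂, ∑ k₂, Q (j₁, j₂) (k₁, k₂)) = 0
    · have hz := hQz j₁ k₁ hs0
      simp [hz]
    · have hs' : 0 < ∑ j₂, ∑ k₂, Q (j₁, j₂) (k₁, k₂) :=
        lt_of_le_of_ne (hs j₁ k₁) (Ne.symm hs0)
      have hRsum : (∑ j₂, ∑ k₂, Q (j₁, j₂) (k₁, k₂) /
          (∑ j₂, ∑ k₂, Q (j₁, j₂) (k₁, k₂))) = 1 := by
        simp only [← Finset.sum_div]
        exact div_self hs0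
      have happ := h₂ (fun j₂ k₂ => Q (j₁, j₂) (k₁, k₂) /
          (∑ j₂, ∑ k₂, Q (j₁, j₂) (k₁, k₂)))
        (fun j₂ k₂ => div_nonneg (hQ _ _) hs'.le) hRsum
      simp only [← Finset.sum_div] at happ
      have hkey : ∀ x L : ℝ, (∑ j₂, ∑ k₂, Q (j₁, j₂) (k₁, k₂)) *
          ((x / (∑ j₂, ∑ k₂, Q (j₁, j₂) (k₁, k₂))) * L) = x * L := by
        intro x L
        field_simp
      have := mul_le_mul_of_nonneg_left happ hs'.le
      calc lam0 * (∑ j₂, (∑ k₂, Q (j₁, j₂) (k₁, k₂)) *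
              Real.log (((∑ k₂, Q (j₁, j₂) (k₁, k₂)) /
                (∑ j₂, ∑ k₂, Q (j₁, j₂) (k₁, k₂))) / (∑ k₂, P₂ j₂ k₂))) +
            lam1 * (∑ k₂, (∑ j₂, Q (j₁, j₂) (k₁, k₂)) *
              Real.log (((∑ j₂, Q (j₁, j₂) (k₁, k₂)) /
                (∑ j₂, ∑ k₂, Q (j₁, j₂) (k₁, k₂))) / (∑ j₂, P₂ j₂ k₂)))
          = (∑ j₂, ∑ k₂, Q (j₁, j₂) (k₁, k₂)) *
            (lam0 * (∑ j₂, ((∑ k₂, Q (j₁, j₂) (k₁, k₂)) /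
                (∑ j₂, ∑ k₂, Q (j₁, j₂) (k₁, k₂))) *
              Real.log (((∑ k₂, Q (j₁, j₂) (k₁, k₂)) /
                (∑ j₂, ∑ k₂, Q (j₁, j₂) (k₁, k₂))) / (∑ k₂, P₂ j₂ k₂))) +
             lam1 * (∑ k₂, ((∑ j₂, Q (j₁, j₂) (k₁, k₂)) /
                (∑ j₂, ∑ k₂, Q (j₁, j₂) (k₁, k₂))) *
              Real.log (((∑ j₂, Q (j₁, j₂) (k₁, k₂)) /
                (∑ j₂, ∑ k₂, Q (j₁, j₂) (k₁, k₂))) / (∑ j₂, P₂ j₂ k₂)))) := by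
            have eqX : (∑ j₂, (∑ k₂, Q (j₁, j₂) (k₁, k₂)) *
                Real.log (((∑ k₂, Q (j₁, j₂) (k₁, k₂)) /
                  (∑ j₂, ∑ k₂, Q (j₁, j₂) (k₁, k₂))) / (∑ k₂, P₂ j₂ k₂))) =
                (∑ j₂, ∑ k₂, Q (j₁, j₂) (k₁, k₂)) *
                ∑ j₂, ((∑ k₂, Q (j₁, j₂) (k₁, k₂)) /
                    (∑ j₂, ∑ k₂, Q (j₁, j₂) (k₁, k₂))) *
                  Real.log (((∑ k₂, Q (j₁, j₂) (k₁, k₂)) /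
                    (∑ j₂, ∑ k₂, Q (j₁, j₂) (k₁, k₂))) / (∑ k₂, P₂ j₂ k₂)) := by
              rw [Finset.mul_sum]
              exact Finset.sum_congr rfl fun j₂ _ => (hkey _ _).symm
            have eqY : (∑ k₂, (∑ j₂, Q (j₁, j₂) (k₁, k₂)) *
                Real.log (((∑ j₂, Q (j₁, j₂) (k₁, k₂)) /
                  (∑ j₂, ∑ k₂, Q (j₁, j₂) (k₁, k₂))) / (∑ j₂, P₂ j₂ k₂))) =
                (∑ j₂, ∑ k₂, Q (j₁, j₂) (k₁, k₂)) *
                ∑ k₂, ((∑ j₂, Q (j₁, j₂) (k₁, k₂)) /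
                    (∑ j₂, ∑ k₂, Q (j₁, j₂) (k₁, k₂))) *
                  Real.log (((∑ j₂, Q (j₁, j₂) (k₁, k₂)) /
                    (∑ j₂, ∑ k₂, Q (j₁, j₂) (k₁, k₂))) / (∑ j₂, P₂ j₂ k₂)) := by
              rw [Finset.mul_sum]
              exact Finset.sum_congr rfl fun k₂ _ => (hkey _ _).symm
            rw [eqX, eqY]
            ring
        _ ≤ (∑ j₂, ∑ k₂, Q (j₁, j₂) (k₁, k₂)) *
            (∑ j₂, ∑ k₂, (Q (j₁, j₂) (k₁, k₂) / (∑ j₂, ∑ k₂, Q (j₁, j₂) (k₁, k₂))) *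
              Real.log ((Q (j₁, j₂) (k₁, k₂) / (∑ j₂, ∑ k₂, Q (j₁, j₂) (k₁, k₂))) /
                P₂ j₂ k₂)) := this
        _ = ∑ j₂, ∑ k₂, Q (j₁, j₂) (k₁, k₂) *
              Real.log ((Q (j₁, j₂) (k₁, k₂) / (∑ j₂, ∑ k₂, Q (j₁, j₂) (k₁, k₂))) /
                P₂ j₂ k₂) := by
            rw [Finset.mul_sum]
            refine Finset.sum_congr rfl fun j₂ _ => ?_
            rw [Finset.mul_sum]
            exact Finset.sum_congr rfl fun k₂ _ => hkey _ _
  -- I3 : log-sum inequality, row side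
  have I3 : ∀ j₁ j₂,
      (∑ k₁, ∑ k₂, Q (j₁, j₂) (k₁, k₂)) *
        Real.log (((∑ k₁, ∑ k₂, Q (j₁, j₂) (k₁, k₂)) /
          (∑ j₂, ∑ k₁, ∑ k₂, Q (j₁, j₂) (k₁, k₂))) / (∑ k₂, P₂ j₂ k₂)) ≤
      ∑ k₁, (∑ k₂, Q (j₁, j₂) (k₁, k₂)) *
        Real.log (((∑ k₂, Q (j₁, j₂) (k₁, k₂)) /
          (∑ j₂, ∑ k₂, Q (j₁, j₂) (k₁, k₂))) / (∑ k₂, P₂ j₂ k₂)) := by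
    intro j₁ j₂
    have h := logSum (fun k₁ => ∑ k₂, Q (j₁, j₂) (k₁, k₂))
      (fun k₁ => (∑ j₂, ∑ k₂, Q (j₁, j₂) (k₁, k₂)) * (∑ k₂, P₂ j₂ k₂))
      (fun k₁ => hu j₁ k₁ j₂)
      (fun k₁ => mul_nonneg (hs j₁ k₁) (hA₂ j₂).le)
      (fun k₁ hb => by
        rcases mul_eq_zero.1 hb with h | h
        · exact Finset.sum_eq_zero fun k₂ _ => hQz j₁ k₁ h j₂ k₂
        · exact absurd h (hA₂ j₂).ne')
    rw [← Finset.sum_mul] at h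
    rw [hrow j₁] at h
    simp only [div_div]
    exact h
  -- I4 : log-sum inequality, column side
  have I4 : ∀ k₁ k₂,
      (∑ j₁, ∑ j₂, Q (j₁, j₂) (k₁, k₂)) *
        Real.log (((∑ j₁, ∑ j₂, Q (j₁, j₂) (k₁, k₂)) /
          (∑ k₂, ∑ j₁, ∑ j₂, Q (j₁, j₂) (k₁, k₂))) / (∑ j₂, P₂ j₂ k₂)) ≤
      ∑ j₁, (∑ j₂, Q (j₁, j₂) (k₁, k₂)) *
        Real.log (((∑ j₂, Q (j₁, j₂) (k₁, k₂)) /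
          (∑ j₂, ∑ k₂, Q (j₁, j₂) (k₁, k₂))) / (∑ j₂, P₂ j₂ k₂)) := by
    intro k₁ k₂
    have h := logSum (fun j₁ => ∑ j₂, Q (j₁, j₂) (k₁, k₂))
      (fun j₁ => (∑ j₂, ∑ k₂, Q (j₁, j₂) (k₁, k₂)) * (∑ j₂, P₂ j₂ k₂))
      (fun j₁ => hv j₁ k₁ k₂)
      (fun j₁ => mul_nonneg (hs j₁ k₁) (hB₂ k₂).le)
      (fun j₁ hb => by
        rcases mul_eq_zero.1 hb with h | h
        · exact Finset.sum_eq_zero fun j₂ _ => hQz j₁ k₁ h j₂ k₂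
        · exact absurd h (hB₂ k₂).ne')
    rw [← Finset.sum_mul] at h
    rw [hcol k₁] at h
    simp only [div_div]
    exact h
  -- assemble
  set T0a := ∑ j₁, (∑ j₂, ∑ k₁, ∑ k₂, Q (j₁, j₂) (k₁, k₂)) *
      Real.log ((∑ j₂, ∑ k₁, ∑ k₂, Q (j₁, j₂) (k₁, k₂)) / (∑ k₁, P₁ j₁ k₁)) with hT0a
  set T0b := ∑ j₁, ∑ j₂, (∑ k₁, ∑ k₂, Q (j₁, j₂) (k₁, k₂)) *
      Real.log (((∑ k₁, ∑ k₂, Q (j₁, j₂) (k₁, k₂)) /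
        (∑ j₂, ∑ k₁, ∑ k₂, Q (j₁, j₂) (k₁, k₂))) / (∑ k₂, P₂ j₂ k₂)) with hT0b
  set T1a := ∑ k₁, (∑ k₂, ∑ j₁, ∑ j₂, Q (j₁, j₂) (k₁, k₂)) *
      Real.log ((∑ k₂, ∑ j₁, ∑ j₂, Q (j₁, j₂) (k₁, k₂)) / (∑ j₁, P₁ j₁ k₁)) with hT1a
  set T1b := ∑ k₁, ∑ k₂, (∑ j₁, ∑ j₂, Q (j₁, j₂) (k₁, k₂)) *
      Real.log (((∑ j₁, ∑ j₂, Q (j₁, j₂) (k₁, k₂)) /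
        (∑ k₂, ∑ j₁, ∑ j₂, Q (j₁, j₂) (k₁, k₂))) / (∑ j₂, P₂ j₂ k₂)) with hT1b
  set K1 := ∑ j₁, ∑ k₁, (∑ j₂, ∑ k₂, Q (j₁, j₂) (k₁, k₂)) *
      Real.log ((∑ j₂, ∑ k₂, Q (j₁, j₂) (k₁, k₂)) / P₁ j₁ k₁) with hK1
  set K2 := ∑ j₁, ∑ k₁, ∑ j₂, ∑ k₂, Q (j₁, j₂) (k₁, k₂) *
      Real.log ((Q (j₁, j₂) (k₁, k₂) / (∑ j₂, ∑ k₂, Q (j₁, j₂) (k₁, k₂))) /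
        P₂ j₂ k₂) with hK2
  set U := ∑ j₁, ∑ k₁, ∑ j₂, (∑ k₂, Q (j₁, j₂) (k₁, k₂)) *
      Real.log (((∑ k₂, Q (j₁, j₂) (k₁, k₂)) /
        (∑ j₂, ∑ k₂, Q (j₁, j₂) (k₁, k₂))) / (∑ k₂, P₂ j₂ k₂)) with hU
  set V := ∑ j₁, ∑ k₁, ∑ k₂, (∑ j₂, Q (j₁, j₂) (k₁, k₂)) *
      Real.log (((∑ j₂, Q (j₁, j₂) (k₁, k₂)) /
        (∑ j₂, ∑ k₂, Q (j₁, j₂) (k₁, k₂))) / (∑ j₂, P₂ j₂ k₂)) with hV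
  have hT0bU : T0b ≤ U := by
    rw [hT0b, hU]
    calc (∑ j₁, ∑ j₂, (∑ k₁, ∑ k₂, Q (j₁, j₂) (k₁, k₂)) *
          Real.log (((∑ k₁, ∑ k₂, Q (j₁, j₂) (k₁, k₂)) /
            (∑ j₂, ∑ k₁, ∑ k₂, Q (j₁, j₂) (k₁, k₂))) / (∑ k₂, P₂ j₂ k₂)))
        ≤ ∑ j₁, ∑ j₂, ∑ k₁, (∑ k₂, Q (j₁, j₂) (k₁, k₂)) *
            Real.log (((∑ k₂, Q (j₁, j₂) (k₁, k₂)) /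
              (∑ j₂, ∑ k₂, Q (j₁, j₂) (k₁, k₂))) / (∑ k₂, P₂ j₂ k₂)) :=
          Finset.sum_le_sum fun j₁ _ => Finset.sum_le_sum fun j₂ _ => I3 j₁ j₂
      _ = ∑ j₁, ∑ k₁, ∑ j₂, (∑ k₂, Q (j₁, j₂) (k₁, k₂)) *
            Real.log (((∑ k₂, Q (j₁, j₂) (k₁, k₂)) /
              (∑ j₂, ∑ k₂, Q (j₁, j₂) (k₁, k₂))) / (∑ k₂, P₂ j₂ k₂)) :=
          Finset.sum_congr rfl fun j₁ _ => Finset.sum_comm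
  have hT1bV : T1b ≤ V := by
    rw [hT1b, hV]
    calc (∑ k₁, ∑ k₂, (∑ j₁, ∑ j₂, Q (j₁, j₂) (k₁, k₂)) *
          Real.log (((∑ j₁, ∑ j₂, Q (j₁, j₂) (k₁, k₂)) /
            (∑ k₂, ∑ j₁, ∑ j₂, Q (j₁, j₂) (k₁, k₂))) / (∑ j₂, P₂ j₂ k₂)))
        ≤ ∑ k₁, ∑ k₂, ∑ j₁, (∑ j₂, Q (j₁, j₂) (k₁, k₂)) *
            Real.log (((∑ j₂, Q (j₁, j₂) (k₁, k₂)) /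
              (∑ j₂, ∑ k₂, Q (j₁, j₂) (k₁, k₂))) / (∑ j₂, P₂ j₂ k₂)) :=
          Finset.sum_le_sum fun k₁ _ => Finset.sum_le_sum fun k₂ _ => I4 k₁ k₂
      _ = ∑ k₁, ∑ j₁, ∑ k₂, (∑ j₂, Q (j₁, j₂) (k₁, k₂)) *
            Real.log (((∑ j₂, Q (j₁, j₂) (k₁, k₂)) /
              (∑ j₂, ∑ k₂, Q (j₁, j₂) (k₁, k₂))) / (∑ j₂, P₂ j₂ k₂)) :=
          Finset.sum_congr rfl fun k₁ _ => Finset.sum_comm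
      _ = ∑ j₁, ∑ k₁, ∑ k₂, (∑ j₂, Q (j₁, j₂) (k₁, k₂)) *
            Real.log (((∑ j₂, Q (j₁, j₂) (k₁, k₂)) /
              (∑ j₂, ∑ k₂, Q (j₁, j₂) (k₁, k₂))) / (∑ j₂, P₂ j₂ k₂)) :=
          Finset.sum_comm
  have hUV : lam0 * U + lam1 * V ≤ K2 := by
    rw [hU, hV, hK2]
    have : ∀ j₁ k₁ : _, lam0 * (∑ j₂, (∑ k₂, Q (j₁, j₂) (k₁, k₂)) *
          Real.log (((∑ k₂, Q (j₁, j₂) (k₁, k₂)) /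
            (∑ j₂, ∑ k₂, Q (j₁, j₂) (k₁, k₂))) / (∑ k₂, P₂ j₂ k₂))) +
        lam1 * (∑ k₂, (∑ j₂, Q (j₁, j₂) (k₁, k₂)) *
          Real.log (((∑ j₂, Q (j₁, j₂) (k₁, k₂)) /
            (∑ j₂, ∑ k₂, Q (j₁, j₂) (k₁, k₂))) / (∑ j₂, P₂ j₂ k₂))) ≤
        ∑ j₂, ∑ k₂, Q (j₁, j₂) (k₁, k₂) *
          Real.log ((Q (j₁, j₂) (k₁, k₂) / (∑ j₂, ∑ k₂, Q (j₁, j₂) (k₁, k₂))) /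
            P₂ j₂ k₂) := I2
    calc lam0 * (∑ j₁, ∑ k₁, ∑ j₂, (∑ k₂, Q (j₁, j₂) (k₁, k₂)) *
            Real.log (((∑ k₂, Q (j₁, j₂) (k₁, k₂)) /
              (∑ j₂, ∑ k₂, Q (j₁, j₂) (k₁, k₂))) / (∑ k₂, P₂ j₂ k₂))) +
          lam1 * (∑ j₁, ∑ k₁, ∑ k₂, (∑ j₂, Q (j₁, j₂) (k₁, k₂)) *
            Real.log (((∑ j₂, Q (j₁, j₂) (k₁, k₂)) /
              (∑ j₂, ∑ k₂, Q (j₁, j₂) (k₁, k₂))) / (∑ j₂, P₂ j₂ k₂)))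
        = ∑ j₁, ∑ k₁, (lam0 * (∑ j₂, (∑ k₂, Q (j₁, j₂) (k₁, k₂)) *
              Real.log (((∑ k₂, Q (j₁, j₂) (k₁, k₂)) /
                (∑ j₂, ∑ k₂, Q (j₁, j₂) (k₁, k₂))) / (∑ k₂, P₂ j₂ k₂))) +
            lam1 * (∑ k₂, (∑ j₂, Q (j₁, j₂) (k₁, k₂)) *
              Real.log (((∑ j₂, Q (j₁, j₂) (k₁, k₂)) /
                (∑ j₂, ∑ k₂, Q (j₁, j₂) (k₁, k₂))) / (∑ j₂, P₂ j₂ k₂)))) := by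
          simp only [Finset.mul_sum]
          rw [← Finset.sum_add_distrib]
          exact Finset.sum_congr rfl fun j₁ _ => (Finset.sum_add_distrib).symm
      _ ≤ ∑ j₁, ∑ k₁, ∑ j₂, ∑ k₂, Q (j₁, j₂) (k₁, k₂) *
            Real.log ((Q (j₁, j₂) (k₁, k₂) / (∑ j₂, ∑ k₂, Q (j₁, j₂) (k₁, k₂))) /
              P₂ j₂ k₂) :=
          Finset.sum_le_sum fun j₁ _ => Finset.sum_le_sum fun k₁ _ => this j₁ k₁
  calc lam0 * (T0a + T0b) + lam1 * (T1a + T1b)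
      = (lam0 * T0a + lam1 * T1a) + (lam0 * T0b + lam1 * T1b) := by ring
    _ ≤ K1 + (lam0 * U + lam1 * V) :=
        add_le_add I1 (add_le_add (mul_le_mul_of_nonneg_left hT0bU hlam0)
          (mul_le_mul_of_nonneg_left hT1bV hlam1))
    _ ≤ K1 + K2 := add_le_add_right hUV _
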